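/- Let 𝔉 be a union-closed family of subsets of X = {a₁,…,aₙ}, with ℱ = φ_w(𝔉) the associated upward-closed family for w = a₁a₂…aₙ, and let a ∈ X. Then ℱ_a is partitioned by φ_w(𝔉_a) and σ_w(a); in turn φ_w(𝔉_a) is partitioned by π_w(a) and ψ(ℱ_ā), where ψ(z) = z ∪ {a}. Moreover σ_w(a) ∪ π_w(a) = { z ∈ ℱ : z \ {a} ∉ ℱ } and |ℱ_a| = |ℱ_ā| + |π_w(a)| + |σ_w(a)|. -/

import Mathlib

open Finset

variable {α : Type*} [DecidableEq α]

/-- A family is union-closed if it is closed under pairwise unions. -/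
def UnionClosed (F : Finset (Finset α)) : Prop := ∀ f ∈ F, ∀ g ∈ F, f ∪ g ∈ F

/-- One rising step: φ_{S,a}(z) = z ∪ {a} if z ∪ {a} ∉ S, and z otherwise. -/
def riseStep (S : Finset (Finset α)) (a : α) (z : Finset α) : Finset α :=
  if insert a z ∈ S then z else insert a z

/-- Iterated rising function along a word (list of letters): at each step the
current family is replaced by its image and the next letter is risen. -/
def riseWord (S : Finset (Finset α)) : List α → Finset α → Finset α
  | [], z => z
  | a :: u, z => riseWord (S.image (riseStep S a)) u (riseStep S a z)

/-- The section of a family along (a prefix of) a word. -/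
def riseSections (S : Finset (Finset α)) : List α → Finset (Finset α)
  | [] => S
  | a :: u => riseSections (S.image (riseStep S a)) u

/-- The spurious elements σ_w(𝔉,a): the elements η ∈ ℱ = φ_w(𝔉) with
a ∈ η \ φ_w⁻¹(η), i.e. η = φ_w(f) with f ∈ 𝔉, a ∉ f, a ∈ η. -/
def spurious (F : Finset (Finset α)) (w : List α) (a : α) : Finset (Finset α) :=
  ((F.filter fun f => a ∉ f).image (riseWord F w)).filter fun η => a ∈ η

/-- The pure elements π_w(𝔉,a): the elements η ∈ φ_w(𝔉_a) with η \ {a} ∉ ℱ. -/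
def pureF (F : Finset (Finset α)) (w : List α) (a : α) : Finset (Finset α) :=
  ((F.filter fun f => a ∈ f).image (riseWord F w)).filter fun η =>
    η.erase a ∉ F.image (riseWord F w)

namespace RiseAux

variable {S F : Finset (Finset α)} {a b x : α} {z f g η : Finset α} {u v w : List α}

lemma riseStep_pos (h : insert b z ∈ S) : riseStep S b z = z := if_pos h

lemma riseStep_neg (h : insert b z ∉ S) : riseStep S b z = insert b z := if_neg h

lemma subset_riseStep (S : Finset (Finset α)) (b : α) (z : Finset α) :
    z ⊆ riseStep S b z := by
  unfold riseStep; split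
  · exact subset_rfl
  · exact Finset.subset_insert _ _

lemma mem_riseStep (h : x ∈ riseStep S b z) : x ∈ z ∨ x = b := by
  unfold riseStep at h; split at h
  · exact Or.inl h
  · rcases Finset.mem_insert.1 h with h | h
    · exact Or.inr h
    · exact Or.inl h

lemma subset_riseWord (S : Finset (Finset α)) (u : List α) (z : Finset α) :
    z ⊆ riseWord S u z := by
  induction u generalizing S z with
  | nil => exact subset_rfl
  | cons b u ih => exact (subset_riseStep S b z).trans (ih _ _)

lemma mem_riseWord (h : x ∈ riseWord S u z) : x ∈ z ∨ x ∈ u := by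
  induction u generalizing S z with
  | nil => exact Or.inl h
  | cons b u ih =>
    rcases ih h with h | h
    · rcases mem_riseStep h with h | h
      · exact Or.inl h
      · exact Or.inr (by simp [h])
    · exact Or.inr (List.mem_cons_of_mem _ h)

lemma riseWord_mem_sections (h : z ∈ S) : riseWord S u z ∈ riseSections S u := by
  induction u generalizing S z with
  | nil => exact h
  | cons b u ih => exact ih (mem_image_of_mem _ h)

lemma sections_eq_image (S : Finset (Finset α)) (u : List α) :
    riseSections S u = S.image (riseWord S u) := by
  induction u generalizing S with
  | nil => simp [riseSections, riseWord]
  | cons b u ih =>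
    show riseSections _ u = _
    rw [ih, Finset.image_image]
    rfl

lemma riseWord_append (S : Finset (Finset α)) (u v : List α) (z : Finset α) :
    riseWord S (u ++ v) z = riseWord (riseSections S u) v (riseWord S u z) := by
  induction u generalizing S z with
  | nil => rfl
  | cons b u ih => exact ih _ _

lemma riseSections_append (S : Finset (Finset α)) (u v : List α) :
    riseSections S (u ++ v) = riseSections (riseSections S u) v := by
  induction u generalizing S with
  | nil => rfl
  | cons b u ih => exact ih _

lemma riseStep_injOn : Set.InjOn (riseStep S b) S := by
  intro f hf g hg h
  unfold riseStep at h
  split_ifs at h with h1 h2 h2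
  · exact h
  · exact absurd (h ▸ hf) h2
  · exact absurd (h.symm ▸ hg) h1
  · have haf : b ∉ f := fun hc => h1 (by rwa [Finset.insert_eq_self.2 hc])
    have hag : b ∉ g := fun hc => h2 (by rwa [Finset.insert_eq_self.2 hc])
    rw [← Finset.erase_insert haf, h, Finset.erase_insert hag]

lemma riseWord_injOn : Set.InjOn (riseWord S u) S := by
  induction u generalizing S with
  | nil => intro f _ g _ h; exact h
  | cons b u ih =>
    intro f hf g hg h
    exact riseStep_injOn hf hg
      (ih (Finset.mem_coe.2 (mem_image_of_mem _ hf))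
        (Finset.mem_coe.2 (mem_image_of_mem _ hg)) h)

lemma insert_mem_image (h : z ∈ S) : insert b z ∈ S.image (riseStep S b) := by
  by_cases hb : insert b z ∈ S
  · exact mem_image.2 ⟨insert b z, hb, riseStep_pos (by rwa [Finset.insert_idem])⟩
  · exact mem_image.2 ⟨z, h, riseStep_neg hb⟩

/-- the "insert x stays in the family" property -/
def Pp (x : α) (S : Finset (Finset α)) : Prop := ∀ z ∈ S, insert x z ∈ S

lemma Pp_step (hP : Pp x S) : Pp x (S.image (riseStep S b)) := by
  intro z' hz'
  obtain ⟨f, hf, rfl⟩ := mem_image.1 hz'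
  by_cases h1 : insert b f ∈ S
  · rw [riseStep_pos h1]
    have h2 : insert x f ∈ S := hP f hf
    refine mem_image.2 ⟨insert x f, h2, riseStep_pos ?_⟩
    rw [Finset.insert_comm]
    exact hP _ h1
  · rw [riseStep_neg h1]
    by_cases hx : x = b
    · subst hx
      rw [Finset.insert_idem]
      exact mem_image.2 ⟨f, hf, riseStep_neg h1⟩
    · have h2 : insert x f ∈ S := hP f hf
      rw [Finset.insert_comm]
      by_cases h3 : insert b (insert x f) ∈ S
      · exact mem_image.2 ⟨insert b (insert x f), h3,
          riseStep_pos (by rwa [Finset.insert_idem])⟩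
      · exact mem_image.2 ⟨insert x f, h2, riseStep_neg h3⟩

lemma Pp_sections (hP : Pp x S) : Pp x (riseSections S u) := by
  induction u generalizing S with
  | nil => exact hP
  | cons b u ih => exact ih (Pp_step hP)

lemma Pp_of_mem (hx : x ∈ u) : Pp x (riseSections S u) := by
  induction u generalizing S with
  | nil => simp at hx
  | cons b u ih =>
    rcases List.mem_cons.1 hx with rfl | hx
    · show Pp x (riseSections (S.image (riseStep S x)) u)
      refine Pp_sections ?_
      intro z' hz'
      obtain ⟨f, hf, rfl⟩ := mem_image.1 hz'
      have : insert x (riseStep S x f) = insert x f := by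
        unfold riseStep; split
        · rfl
        · rw [Finset.insert_idem]
      rw [this]
      exact insert_mem_image hf
    · exact ih hx

lemma UC_step (hFS : UnionClosed S) : UnionClosed (S.image (riseStep S b)) := by
  intro z' hz' y' hy'
  obtain ⟨f, hf, rfl⟩ := mem_image.1 hz'
  obtain ⟨g, hg, rfl⟩ := mem_image.1 hy'
  have hu : f ∪ g ∈ S := hFS f hf g hg
  by_cases h1 : insert b f ∈ S <;> by_cases h2 : insert b g ∈ S
  · rw [riseStep_pos h1, riseStep_pos h2]
    by_cases h3 : insert b (f ∪ g) ∈ S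
    · exact mem_image.2 ⟨f ∪ g, hu, riseStep_pos h3⟩
    · exact absurd (by rw [← Finset.insert_union]; exact hFS _ h1 g hg) h3
  · rw [riseStep_pos h1, riseStep_neg h2, Finset.union_insert]
    exact insert_mem_image hu
  · rw [riseStep_neg h1, riseStep_pos h2, Finset.insert_union]
    exact insert_mem_image hu
  · rw [riseStep_neg h1, riseStep_neg h2, Finset.insert_union, Finset.union_insert,
      Finset.insert_idem]
    exact insert_mem_image hu

lemma UC_sections (hFS : UnionClosed S) : UnionClosed (riseSections S u) := by
  induction u generalizing S with
  | nil => exact hFS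
  | cons b u ih => exact ih (UC_step hFS)

/-- the key invariant: no subset of η \ {a} avoiding a is in S -/
def J (S : Finset (Finset α)) (a : α) (η : Finset α) : Prop :=
  ∀ g ∈ S, a ∉ g → ¬ g ⊆ η.erase a

lemma J_step (hba : b ≠ a) (hUC : UnionClosed S) (hη : η ∈ S) (hJ : J S a η) :
    J (S.image (riseStep S b)) a (riseStep S b η) := by
  intro g' hg' hag' hsub
  obtain ⟨g, hg, rfl⟩ := mem_image.1 hg'
  have hgsub : g ⊆ riseStep S b g := subset_riseStep S b g
  have hag : a ∉ g := fun h => hag' (hgsub h)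
  have hsub' : g ⊆ (riseStep S b η).erase a := hgsub.trans hsub
  by_cases h1 : insert b η ∈ S
  · rw [riseStep_pos h1] at hsub'
    exact hJ g hg hag hsub'
  · rw [riseStep_neg h1, Finset.erase_insert_of_ne hba] at hsub'
    by_cases hbg : b ∈ g
    · have hkey : g ∪ η = insert b η := by
        apply Finset.Subset.antisymm
        · apply Finset.union_subset
          · exact hsub'.trans (Finset.insert_subset_insert _ (Finset.erase_subset _ _))
          · exact Finset.subset_insert _ _
        · exact Finset.insert_subset (Finset.mem_union_left _ hbg)
            Finset.subset_union_right
      exact h1 (hkey ▸ hUC g hg η hη)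
    · refine hJ g hg hag (fun y hy => ?_)
      rcases Finset.mem_insert.1 (hsub' hy) with rfl | h
      · exact absurd hy hbg
      · exact h

lemma J_word (hau : a ∉ u) (hUC : UnionClosed S) (hη : η ∈ S) (hJ : J S a η) :
    J (riseSections S u) a (riseWord S u η) := by
  induction u generalizing S η with
  | nil => exact hJ
  | cons b u ih =>
    have hba : b ≠ a := fun h => hau (h ▸ (List.mem_cons_self : b ∈ b :: u))
    exact ih (fun h => hau (List.mem_cons_of_mem _ h)) (UC_step hUC)
      (mem_image_of_mem _ hη) (J_step hba hUC hη hJ)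

lemma J_init (hUC : UnionClosed S) (hz : z ∈ S) (hnz : insert a z ∉ S) :
    J (S.image (riseStep S a)) a (insert a z) := by
  have haz : a ∉ z := fun h => hnz (by rwa [Finset.insert_eq_self.2 h])
  intro g' hg' hag' hsub
  rw [Finset.erase_insert haz] at hsub
  obtain ⟨g, hg, rfl⟩ := mem_image.1 hg'
  by_cases h1 : insert a g ∈ S
  · rw [riseStep_pos h1] at hag' hsub
    have : insert a g ∪ z = insert a z := by
      rw [Finset.insert_union, Finset.union_eq_right.2 hsub]
    exact hnz (this ▸ hUC _ h1 z hz)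
  · rw [riseStep_neg h1] at hag'
    exact hag' (Finset.mem_insert_self a g)

lemma factB (hFU : UnionClosed F) (hnd : w.Nodup) (ha : a ∈ w)
    (hf : f ∈ F) (haf : a ∉ f) (haφ : a ∈ riseWord F w f) :
    (riseWord F w f).erase a ∉ F.image (riseWord F w) := by
  obtain ⟨u₁, u₂, rfl⟩ := List.append_of_mem ha
  have hnd2 : a ∉ u₂ := by
    have := (List.nodup_append.1 hnd).2.1
    exact (List.nodup_cons.1 this).1
  have hnd1 : a ∉ u₁ := fun h =>
    (List.disjoint_of_nodup_append hnd) h (List.mem_cons_self : a ∈ a :: u₂)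
  set S₁ := riseSections F u₁ with hS₁
  set z₁ := riseWord F u₁ f with hz₁
  have hz₁S : z₁ ∈ S₁ := riseWord_mem_sections hf
  have haz₁ : a ∉ z₁ := by
    intro h
    rcases mem_riseWord h with h | h
    · exact haf h
    · exact hnd1 h
  have hw : riseWord F (u₁ ++ a :: u₂) f
      = riseWord (S₁.image (riseStep S₁ a)) u₂ (riseStep S₁ a z₁) := by
    rw [riseWord_append]; rfl
  have hsec : riseSections F (u₁ ++ a :: u₂)
      = riseSections (S₁.image (riseStep S₁ a)) u₂ := by
    rw [riseSections_append]; rfl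
  rw [← sections_eq_image, hsec, hw]
  rw [hw] at haφ
  by_cases hc : insert a z₁ ∈ S₁
  · exfalso
    rw [riseStep_pos hc] at haφ
    rcases mem_riseWord haφ with h | h
    · exact haz₁ h
    · exact hnd2 h
  · rw [riseStep_neg hc]
    have hUC₁ : UnionClosed S₁ := UC_sections hFU
    have hJ0 : J (S₁.image (riseStep S₁ a)) a (insert a z₁) := J_init hUC₁ hz₁S hc
    have hmem : insert a z₁ ∈ S₁.image (riseStep S₁ a) := by
      rw [← riseStep_neg hc]; exact mem_image_of_mem _ hz₁S
    have hJend := J_word hnd2 (UC_step hUC₁) hmem hJ0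
    rw [riseStep_neg hc] at haφ
    intro hin
    exact hJend _ hin (Finset.notMem_erase _ _) subset_rfl

end RiseAux

open RiseAux in
/-- Lemma 5.4 -/
theorem stmt_13 {α : Type*} [DecidableEq α] [Fintype α]
    (F : Finset (Finset α)) (hF : UnionClosed F)
    (w : List α) (hnd : w.Nodup) (hall : ∀ x : α, x ∈ w)
    (a : α) :
    ((F.image (riseWord F w)).filter (fun η => a ∈ η) =
        (F.filter fun f => a ∈ f).image (riseWord F w) ∪ spurious F w a ∧
      Disjoint ((F.filter fun f => a ∈ f).image (riseWord F w)) (spurious F w a)) ∧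
    ((F.filter fun f => a ∈ f).image (riseWord F w) =
        pureF F w a ∪ ((F.image (riseWord F w)).filter (fun η => a ∉ η)).image (insert a) ∧
      Disjoint (pureF F w a)
        (((F.image (riseWord F w)).filter (fun η => a ∉ η)).image (insert a))) ∧
    (spurious F w a ∪ pureF F w a =
      (F.image (riseWord F w)).filter fun z => z.erase a ∉ F.image (riseWord F w)) ∧
    ((F.image (riseWord F w)).filter (fun η => a ∈ η)).card =
      ((F.image (riseWord F w)).filter (fun η => a ∉ η)).card +
        (pureF F w a).card + (spurious F w a).card := by
  set φ := riseWord F w with hφ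
  have hsub : ∀ f : Finset α, f ⊆ φ f := fun f => subset_riseWord F w f
  have hinj : Set.InjOn φ F := riseWord_injOn
  have hupA : ∀ z ∈ F.image φ, insert a z ∈ F.image φ := by
    intro z hz
    have := Pp_of_mem (S := F) (hall a)
    rw [sections_eq_image] at this
    exact this z hz
  have hfactB : ∀ f ∈ F, a ∉ f → a ∈ φ f → (φ f).erase a ∉ F.image φ :=
    fun f hf haf haφ => factB hF hnd (hall a) hf haf haφ
  -- Part 1
  have part1eq : (F.image φ).filter (fun η => a ∈ η) =
      (F.filter fun f => a ∈ f).image φ ∪ spurious F w a := by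
    ext η
    simp only [spurious]
    constructor
    · intro h
      obtain ⟨hη, haη⟩ := mem_filter.1 h
      obtain ⟨f, hf, rfl⟩ := mem_image.1 hη
      by_cases haf : a ∈ f
      · exact mem_union_left _ (mem_image.2 ⟨f, mem_filter.2 ⟨hf, haf⟩, rfl⟩)
      · exact mem_union_right _
          (mem_filter.2 ⟨mem_image.2 ⟨f, mem_filter.2 ⟨hf, haf⟩, rfl⟩, haη⟩)
    · intro h
      rcases mem_union.1 h with h | h
      · obtain ⟨f, hf, rfl⟩ := mem_image.1 h
        obtain ⟨hfF, haf⟩ := mem_filter.1 hf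
        exact mem_filter.2 ⟨mem_image.2 ⟨f, hfF, rfl⟩, hsub f haf⟩
      · obtain ⟨hη, haη⟩ := mem_filter.1 h
        obtain ⟨f, hf, rfl⟩ := mem_image.1 hη
        exact mem_filter.2 ⟨mem_image.2 ⟨f, (mem_filter.1 hf).1, rfl⟩, haη⟩
  have part1disj : Disjoint ((F.filter fun f => a ∈ f).image φ) (spurious F w a) := by
    rw [Finset.disjoint_left]
    intro η h1 h2
    simp only [spurious] at h2
    obtain ⟨f, hf, rfl⟩ := mem_image.1 h1
    obtain ⟨hfF, haf⟩ := mem_filter.1 hf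
    obtain ⟨h2', _⟩ := mem_filter.1 h2
    obtain ⟨g, hg, hgη⟩ := mem_image.1 h2'
    obtain ⟨hgF, hag⟩ := mem_filter.1 hg
    have : g = f := hinj hgF hfF hgη
    exact hag (this ▸ haf)
  -- Part 2
  have part2eq : (F.filter fun f => a ∈ f).image φ =
      pureF F w a ∪ ((F.image φ).filter (fun η => a ∉ η)).image (insert a) := by
    ext η
    constructor
    · intro h
      obtain ⟨f, hf, rfl⟩ := mem_image.1 h
      obtain ⟨hfF, haf⟩ := mem_filter.1 hf
      by_cases hc : (φ f).erase a ∈ F.image φ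
      · refine mem_union_right _ (mem_image.2 ⟨(φ f).erase a, ?_, ?_⟩)
        · exact mem_filter.2 ⟨hc, Finset.notMem_erase _ _⟩
        · exact Finset.insert_erase (hsub f haf)
      · exact mem_union_left _ (mem_filter.2 ⟨h, hc⟩)
    · intro h
      rcases mem_union.1 h with h | h
      · exact (mem_filter.1 h).1
      · obtain ⟨z, hz, rfl⟩ := mem_image.1 h
        obtain ⟨hzF, haz⟩ := mem_filter.1 hz
        have hins : insert a z ∈ F.image φ := hupA z hzF
        obtain ⟨g, hg, hgη⟩ := mem_image.1 hins
        have hag : a ∈ g := by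
          by_contra hag
          have haφg : a ∈ φ g := hgη ▸ Finset.mem_insert_self a z
          have := hfactB g hg hag haφg
          rw [hgη, Finset.erase_insert haz] at this
          exact this hzF
        exact mem_image.2 ⟨g, mem_filter.2 ⟨hg, hag⟩, hgη⟩
  have part2disj : Disjoint (pureF F w a)
      (((F.image φ).filter (fun η => a ∉ η)).image (insert a)) := by
    rw [Finset.disjoint_left]
    intro η h1 h2
    obtain ⟨_, hno⟩ := mem_filter.1 h1
    obtain ⟨z, hz, rfl⟩ := mem_image.1 h2
    obtain ⟨hzF, haz⟩ := mem_filter.1 hz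
    rw [Finset.erase_insert haz] at hno
    exact hno hzF
  -- Part 3
  have part3 : spurious F w a ∪ pureF F w a =
      (F.image φ).filter fun z => z.erase a ∉ F.image φ := by
    ext η
    constructor
    · intro h
      rcases mem_union.1 h with h | h
      · obtain ⟨h1, haη⟩ := mem_filter.1 h
        obtain ⟨f, hf, rfl⟩ := mem_image.1 h1
        obtain ⟨hfF, haf⟩ := mem_filter.1 hf
        exact mem_filter.2 ⟨mem_image.2 ⟨f, hfF, rfl⟩, hfactB f hfF haf haη⟩
      · obtain ⟨h1, hno⟩ := mem_filter.1 h
        obtain ⟨f, hf, rfl⟩ := mem_image.1 h1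
        exact mem_filter.2 ⟨mem_image.2 ⟨f, (mem_filter.1 hf).1, rfl⟩, hno⟩
    · intro h
      obtain ⟨hη, hno⟩ := mem_filter.1 h
      obtain ⟨f, hf, rfl⟩ := mem_image.1 hη
      have haη : a ∈ φ f := by
        by_contra haη
        rw [Finset.erase_eq_of_notMem haη] at hno
        exact hno (mem_image.2 ⟨f, hf, rfl⟩)
      by_cases haf : a ∈ f
      · exact mem_union_right _
          (mem_filter.2 ⟨mem_image.2 ⟨f, mem_filter.2 ⟨hf, haf⟩, rfl⟩, hno⟩)
      · exact mem_union_left _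
          (mem_filter.2 ⟨mem_image.2 ⟨f, mem_filter.2 ⟨hf, haf⟩, rfl⟩, haη⟩)
  -- Part 4
  have hcard1 : ((F.image φ).filter (fun η => a ∈ η)).card =
      ((F.filter fun f => a ∈ f).image φ).card + (spurious F w a).card := by
    rw [part1eq, Finset.card_union_of_disjoint part1disj]
  have hcard2 : ((F.filter fun f => a ∈ f).image φ).card =
      (pureF F w a).card + (((F.image φ).filter (fun η => a ∉ η)).image (insert a)).card := by
    rw [part2eq, Finset.card_union_of_disjoint part2disj]
  have hcard3 : (((F.image φ).filter (fun η => a ∉ η)).image (insert a)).card =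
      ((F.image φ).filter (fun η => a ∉ η)).card := by
    apply Finset.card_image_of_injOn
    intro z1 h1 z2 h2 h
    have ha1 : a ∉ z1 := (mem_filter.1 h1).2
    have ha2 : a ∉ z2 := (mem_filter.1 h2).2
    rw [← Finset.erase_insert ha1, h, Finset.erase_insert ha2]
  exact ⟨⟨part1eq, part1disj⟩, ⟨part2eq, part2disj⟩, part3, by omega⟩
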